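/- For any subset I of [n-1], the sign-twisted generating function over the parabolic quotient S_n^I of the symmetric group satisfies Σ_{σ ∈ S_n^I} (-1)^{inv(σ)} x^{oinv(σ)} = Σ_{σ ∈ S_n^I, σ chessboard} (-1)^{inv(σ)} x^{oinv(σ)}, where a permutation σ ∈ S_n is chessboard if σ(i) ≢ σ(i+1) (mod 2) for all i ∈ [n-1]. -/

import Mathlib

open Polynomial Finset

namespace OddLength

/-- A signed permutation of degree `n`, encoded as an underlying permutation of
`Fin n` together with a sign vector. -/
abbrev SP (n : ℕ) := Equiv.Perm (Fin n) × (Fin n → Bool)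

/-- The one-line value `σ(i)` of a signed permutation, for `i ∈ [1,n]` (and `0` elsewhere). -/
def sval {n : ℕ} (σ : SP n) (i : ℕ) : ℤ :=
  if h : 1 ≤ i ∧ i ≤ n then
    (if σ.2 ⟨i - 1, by omega⟩ then (-1 : ℤ) else 1) *
      (((σ.1 ⟨i - 1, by omega⟩ : Fin n) : ℕ) + 1 : ℤ)
  else 0

/-- A signed permutation is *even* (lies in the Weyl group `D_n`) if it has an even
number of negative entries in its one-line notation. -/
def IsEvenSP {n : ℕ} (σ : SP n) : Prop :=
  Even ((Finset.univ.filter (fun i => σ.2 i = true)).card)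

instance {n : ℕ} (σ : SP n) : Decidable (IsEvenSP σ) := by
  unfold IsEvenSP; infer_instance

/-- Pairs `1 ≤ i < j ≤ n` of positions. -/
def pairs (n : ℕ) : Finset (ℕ × ℕ) :=
  (Finset.Icc 1 n ×ˢ Finset.Icc 1 n).filter (fun p => p.1 < p.2)

/-- Number of inversions. -/
def invSP {n : ℕ} (σ : SP n) : ℕ :=
  ((pairs n).filter (fun p => sval σ p.2 < sval σ p.1)).card

/-- Number of negative sum pairs. -/
def nspSP {n : ℕ} (σ : SP n) : ℕ :=
  ((pairs n).filter (fun p => sval σ p.1 + sval σ p.2 < 0)).card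

/-- Number of odd inversions (positions of different parity). -/
def oinvSP {n : ℕ} (σ : SP n) : ℕ :=
  ((pairs n).filter (fun p => sval σ p.2 < sval σ p.1 ∧ p.1 % 2 ≠ p.2 % 2)).card

/-- Number of odd negative sum pairs (positions of different parity). -/
def onspSP {n : ℕ} (σ : SP n) : ℕ :=
  ((pairs n).filter (fun p => sval σ p.1 + sval σ p.2 < 0 ∧ p.1 % 2 ≠ p.2 % 2)).card

/-- The type-`D` Coxeter length `ℓ(σ) = inv(σ) + nsp(σ)`. -/
def ellD {n : ℕ} (σ : SP n) : ℕ := invSP σ + nspSP σ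

/-- The type-`D` odd length `L(σ) = oinv(σ) + onsp(σ)`. -/
def LD {n : ℕ} (σ : SP n) : ℕ := oinvSP σ + onspSP σ

/-- The descent value at position `i`, with the type-`D` convention `σ(0) := -σ(2)`. -/
def dval {n : ℕ} (σ : SP n) (i : ℕ) : ℤ := if i = 0 then -sval σ 2 else sval σ i

/-- Membership in the parabolic quotient `D_n^I`: `σ(i) < σ(i+1)` for all `i ∈ I`,
with the convention `σ(0) = -σ(2)`. -/
def InQuot {n : ℕ} (σ : SP n) (I : Finset ℕ) : Prop :=
  ∀ i ∈ I, dval σ i < dval σ (i + 1)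

instance {n : ℕ} (σ : SP n) (I : Finset ℕ) : Decidable (InQuot σ I) := by
  unfold InQuot; infer_instance

/-- `σ` is ascending: `σ(1) < σ(2) < ⋯ < σ(n)`. -/
def Ascending {n : ℕ} (σ : SP n) : Prop :=
  ∀ i, 1 ≤ i → i < n → sval σ i < sval σ (i + 1)

/-- `σ` is a chessboard element: `σ(i) ≢ σ(i+1) (mod 2)` for all `i ∈ [n-1]`. -/
def Chessboard {n : ℕ} (σ : SP n) : Prop :=
  ∀ i ∈ Finset.Icc 1 (n - 1), sval σ i % 2 ≠ sval σ (i + 1) % 2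

instance {n : ℕ} (σ : SP n) : Decidable (Chessboard σ) := by
  unfold Chessboard; infer_instance

/-- The sign-twisted generating function of the odd length over `D_n^I`. -/
noncomputable def genD (n : ℕ) (I : Finset ℕ) : Polynomial ℤ :=
  ∑ σ ∈ Finset.univ.filter (fun σ : SP n => IsEvenSP σ ∧ InQuot σ I),
    (-1 : Polynomial ℤ) ^ ellD σ * X ^ LD σ


/-- `σ` encodes an ordinary permutation of `[n]`: all its entries are positive. -/
def PosSP {n : ℕ} (σ : SP n) : Prop := ∀ i ∈ Finset.Icc 1 n, 0 < sval σ i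

instance {n : ℕ} (σ : SP n) : Decidable (PosSP σ) := by
  unfold PosSP; infer_instance

section Stmt11Aux

variable {n : ℕ}

/-- Value (0-based) at 0-based position `k`, totalized. -/
def vp (σ : SP n) (k : ℕ) : ℕ :=
  if h : k < n then ((σ.1 ⟨k, h⟩ : Fin n) : ℕ) else 0

/-- Position (0-based) of 0-based value `k`, totalized. -/
def posp (σ : SP n) (k : ℕ) : ℕ :=
  if h : k < n then ((σ.1⁻¹ ⟨k, h⟩ : Fin n) : ℕ) else 0

/-- Set of `k` such that the (0-based) values `k` and `k+1` sit in positions of equal parity. -/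
def badset (σ : SP n) : Finset ℕ :=
  (Finset.range (n - 1)).filter (fun k => posp σ k % 2 = posp σ (k + 1) % 2)

/-- The cancelling involution: swap values `k` and `k+1` for the minimal bad `k`. -/
def T (σ : SP n) : SP n :=
  if h : (badset σ).Nonempty then
    have h1 : (badset σ).min' h < n - 1 :=
      Finset.mem_range.1 (Finset.mem_filter.1 (Finset.min'_mem _ h)).1
    (Equiv.swap ⟨(badset σ).min' h, by omega⟩ ⟨(badset σ).min' h + 1, by omega⟩ * σ.1, σ.2)
  else σ

lemma vp_lt (σ : SP n) {k : ℕ} (hk : k < n) : vp σ k < n := by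
  simp only [vp, dif_pos hk]; exact (σ.1 ⟨k, hk⟩).isLt

lemma posp_lt (σ : SP n) {k : ℕ} (hk : k < n) : posp σ k < n := by
  simp only [posp, dif_pos hk]; exact (σ.1⁻¹ ⟨k, hk⟩).isLt

lemma vp_posp (σ : SP n) {k : ℕ} (hk : k < n) : vp σ (posp σ k) = k := by
  simp only [posp, dif_pos hk]
  have h1 : ((σ.1⁻¹ ⟨k, hk⟩ : Fin n) : ℕ) < n := (σ.1⁻¹ ⟨k, hk⟩).isLt
  simp only [vp, dif_pos h1, Fin.eta]
  simp

lemma posp_vp (σ : SP n) {k : ℕ} (hk : k < n) : posp σ (vp σ k) = k := by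
  simp only [vp, dif_pos hk]
  have h1 : ((σ.1 ⟨k, hk⟩ : Fin n) : ℕ) < n := (σ.1 ⟨k, hk⟩).isLt
  simp only [posp, dif_pos h1, Fin.eta]
  simp

lemma alt_affine (f : ℕ → ℕ) (m : ℕ) (h : ∀ k, k + 1 < m → f k % 2 ≠ f (k + 1) % 2) :
    ∀ k, k < m → f k % 2 = (f 0 + k) % 2 := by
  intro k
  induction k with
  | zero => intro _; omega
  | succ k ih =>
    intro hk
    have h1 := h k (by omega)
    have h2 := ih (by omega)
    omega

lemma alt_transfer (f g : ℕ → ℕ) (m : ℕ) (hg : ∀ k, k < m → g k < m)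
    (hfg : ∀ k, k < m → f (g k) = k)
    (h : ∀ k, k + 1 < m → f k % 2 ≠ f (k + 1) % 2) :
    ∀ k, k + 1 < m → g k % 2 ≠ g (k + 1) % 2 := by
  intro k hk
  have haff := alt_affine f m h
  have h1 := haff (g k) (hg k (by omega))
  have h2 := haff (g (k + 1)) (hg (k + 1) hk)
  rw [hfg k (by omega)] at h1
  rw [hfg (k + 1) hk] at h2
  omega

lemma pos_iff_sgn (σ : SP n) : PosSP σ ↔ ∀ j : Fin n, σ.2 j = false := by
  constructor
  · intro hp j
    have hj : (j : ℕ) + 1 ∈ Finset.Icc 1 n := by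
      simp only [Finset.mem_Icc]; exact ⟨by omega, j.isLt⟩
    have := hp _ hj
    by_contra hb
    rw [Bool.not_eq_false] at hb
    have h1 : 1 ≤ (j : ℕ) + 1 ∧ (j : ℕ) + 1 ≤ n := ⟨by omega, j.isLt⟩
    rw [sval, dif_pos h1] at this
    have hj' : (⟨(j : ℕ) + 1 - 1, by omega⟩ : Fin n) = j := by ext; simp
    rw [hj', hb] at this
    simp at this
    omega
  · intro hs i hi
    simp only [Finset.mem_Icc] at hi
    rw [sval, dif_pos hi, hs]
    norm_num

lemma sval_eq (σ : SP n) (hs : ∀ j : Fin n, σ.2 j = false) {i : ℕ} (h1 : 1 ≤ i) (h2 : i ≤ n) :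
    sval σ i = (vp σ (i - 1) : ℤ) + 1 := by
  have hi : i - 1 < n := by omega
  rw [sval, dif_pos ⟨h1, h2⟩, hs, vp, dif_pos hi]
  simp

lemma chess_iff (σ : SP n) (hs : ∀ j : Fin n, σ.2 j = false) :
    Chessboard σ ↔ ∀ k, k + 1 < n → vp σ k % 2 ≠ vp σ (k + 1) % 2 := by
  constructor
  · intro hc k hk
    have hik : k + 1 ∈ Finset.Icc 1 (n - 1) := by simp only [Finset.mem_Icc]; omega
    have := hc (k + 1) hik
    rw [sval_eq σ hs (by omega) (by omega), sval_eq σ hs (by omega) (by omega)] at this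
    simp only [Nat.add_sub_cancel] at this
    omega
  · intro h i hi
    simp only [Finset.mem_Icc] at hi
    have hn : 2 ≤ n := by omega
    have hk := h (i - 1) (by omega)
    rw [sval_eq σ hs (by omega) (by omega), sval_eq σ hs (by omega) (by omega)]
    have : i + 1 - 1 = i - 1 + 1 := by omega
    rw [this]
    omega

lemma badset_empty_iff (σ : SP n) :
    badset σ = ∅ ↔ ∀ k, k + 1 < n → posp σ k % 2 ≠ posp σ (k + 1) % 2 := by
  rw [badset, Finset.filter_eq_empty_iff]
  constructor
  · intro h k hk
    exact h (Finset.mem_range.2 (by omega))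
  · intro h k hk
    exact h k (by have := Finset.mem_range.1 hk; omega)

lemma chess_iff_badset_empty (σ : SP n) (hs : ∀ j : Fin n, σ.2 j = false) :
    Chessboard σ ↔ badset σ = ∅ := by
  rw [chess_iff σ hs, badset_empty_iff]
  constructor
  · intro h
    exact alt_transfer (vp σ) (posp σ) n (fun k hk => posp_lt σ hk)
      (fun k hk => vp_posp σ hk) h
  · intro h
    exact alt_transfer (posp σ) (vp σ) n (fun k hk => vp_lt σ hk)
      (fun k hk => posp_vp σ hk) h

section SwapLemmas

variable (π : Equiv.Perm (Fin n)) (a b : Fin n) (hab : (a : ℕ) + 1 = (b : ℕ))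

lemma swap_fix {x : Fin n} (hx1 : x ≠ π⁻¹ a) (hx2 : x ≠ π⁻¹ b) :
    Equiv.swap a b (π x) = π x := by
  apply Equiv.swap_apply_of_ne_of_ne
  · intro hc
    apply hx1
    have h : π x = a := by exact_mod_cast hc
    rw [← h]; simp
  · intro hc
    apply hx2
    have h : π x = b := by exact_mod_cast hc
    rw [← h]; simp

lemma val_ne {x : Fin n} (hx1 : x ≠ π⁻¹ a) (hx2 : x ≠ π⁻¹ b) :
    ((π x : Fin n) : ℕ) ≠ (a : ℕ) ∧ ((π x : Fin n) : ℕ) ≠ (b : ℕ) := by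
  constructor
  · intro hc
    have h : π x = a := Fin.ext hc
    exact hx1 (by rw [← h]; simp)
  · intro hc
    have h : π x = b := Fin.ext hc
    exact hx2 (by rw [← h]; simp)

include hab in
lemma cmp_iff {x y : Fin n}
    (hxy : ¬((x = π⁻¹ a ∨ x = π⁻¹ b) ∧ (y = π⁻¹ a ∨ y = π⁻¹ b))) :
    ((Equiv.swap a b (π x) : Fin n) : ℕ) < ((Equiv.swap a b (π y) : Fin n) : ℕ) ↔
      ((π x : Fin n) : ℕ) < ((π y : Fin n) : ℕ) := by
  push_neg at hxy
  by_cases hx1 : x = π⁻¹ a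
  · have hy1 : y ≠ π⁻¹ a := (hxy (Or.inl hx1)).1
    have hy2 : y ≠ π⁻¹ b := (hxy (Or.inl hx1)).2
    have hval := val_ne π a b hy1 hy2
    rw [swap_fix π a b hy1 hy2, hx1]
    simp only [Equiv.Perm.coe_inv, Equiv.apply_symm_apply, Equiv.swap_apply_left]
    omega
  · by_cases hx2 : x = π⁻¹ b
    · by_cases hy1 : y = π⁻¹ a
      · rw [hx2, hy1]
        simp only [Equiv.Perm.coe_inv, Equiv.apply_symm_apply, Equiv.swap_apply_left, Equiv.swap_apply_right]
        omega
      · by_cases hy2 : y = π⁻¹ b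
        · rw [hx2, hy2]
          omega
        · have hval := val_ne π a b hy1 hy2
          rw [swap_fix π a b hy1 hy2, hx2]
          simp only [Equiv.Perm.coe_inv, Equiv.apply_symm_apply, Equiv.swap_apply_right]
          omega
    · have hval := val_ne π a b hx1 hx2
      rw [swap_fix π a b hx1 hx2]
      by_cases hy1 : y = π⁻¹ a
      · rw [hy1]
        simp only [Equiv.Perm.coe_inv, Equiv.apply_symm_apply, Equiv.swap_apply_left]
        omega
      · by_cases hy2 : y = π⁻¹ b
        · rw [hy2]
          simp only [Equiv.Perm.coe_inv, Equiv.apply_symm_apply, Equiv.swap_apply_right]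
          omega
        · rw [swap_fix π a b hy1 hy2]

end SwapLemmas

lemma card_filter_flip {α : Type*} (s : Finset α) (p q : α → Prop)
    [DecidablePred p] [DecidablePred q] (e : α) (he : e ∈ s)
    (hoff : ∀ x ∈ s, x ≠ e → (p x ↔ q x)) (hflip : p e ↔ ¬ q e) :
    Odd ((s.filter p).card + (s.filter q).card) := by
  classical
  rw [Finset.card_filter, Finset.card_filter, ← Finset.sum_add_distrib,
    ← Finset.add_sum_erase _ _ he]
  have h1 : Even (∑ x ∈ s.erase e, ((if p x then 1 else 0) + (if q x then 1 else 0))) := by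
    apply Finset.even_sum
    intro x hx
    have hxs := Finset.mem_of_mem_erase hx
    have hxe := Finset.ne_of_mem_erase hx
    have := hoff x hxs hxe
    by_cases hp : p x
    · rw [if_pos hp, if_pos (this.1 hp)]; exact ⟨1, rfl⟩
    · rw [if_neg hp, if_neg (fun hq => hp (this.2 hq))]; exact ⟨0, rfl⟩
  have h2 : ((if p e then 1 else 0) + (if q e then 1 else 0)) = 1 := by
    by_cases hp : p e
    · rw [if_pos hp, if_neg (hflip.1 hp)]
    · rw [if_neg hp, if_pos (by by_contra hq; exact hp (hflip.2 hq))]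
  rw [h2]
  exact Odd.add_even odd_one h1

lemma mem_pairs {p : ℕ × ℕ} : p ∈ pairs n ↔ 1 ≤ p.1 ∧ p.2 ≤ n ∧ p.1 < p.2 := by
  simp only [pairs, Finset.mem_filter, Finset.mem_product, Finset.mem_Icc]
  omega

/-- The smaller of the two swapped values, as an element of `Fin n`. -/
def aIdx (σ : SP n) (h : (badset σ).Nonempty) : Fin n :=
  ⟨(badset σ).min' h, by
    have := Finset.mem_range.1 (Finset.mem_filter.1 (Finset.min'_mem _ h)).1; omega⟩

/-- The larger of the two swapped values, as an element of `Fin n`. -/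
def bIdx (σ : SP n) (h : (badset σ).Nonempty) : Fin n :=
  ⟨(badset σ).min' h + 1, by
    have := Finset.mem_range.1 (Finset.mem_filter.1 (Finset.min'_mem _ h)).1; omega⟩

lemma hab_idx (σ : SP n) (h : (badset σ).Nonempty) :
    ((aIdx σ h : Fin n) : ℕ) + 1 = ((bIdx σ h : Fin n) : ℕ) := rfl

lemma T_eq (σ : SP n) (h : (badset σ).Nonempty) :
    T σ = (Equiv.swap (aIdx σ h) (bIdx σ h) * σ.1, σ.2) := by
  rw [T, dif_pos h]
  rfl

lemma par_eq (σ : SP n) (h : (badset σ).Nonempty) :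
    ((σ.1⁻¹ (aIdx σ h) : Fin n) : ℕ) % 2 = ((σ.1⁻¹ (bIdx σ h) : Fin n) : ℕ) % 2 := by
  have hm := Finset.mem_filter.1 (Finset.min'_mem _ h)
  have hr := Finset.mem_range.1 hm.1
  have hthis := hm.2
  have hk1 : (badset σ).min' h < n := by omega
  have hk2 : (badset σ).min' h + 1 < n := by omega
  rw [posp, posp, dif_pos hk1, dif_pos hk2] at hthis
  exact hthis

lemma ab_ne (σ : SP n) (h : (badset σ).Nonempty) : aIdx σ h ≠ bIdx σ h := by
  intro hc
  have := congrArg Fin.val hc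
  simp [aIdx, bIdx] at this

lemma pab_ne (σ : SP n) (h : (badset σ).Nonempty) :
    σ.1⁻¹ (aIdx σ h) ≠ σ.1⁻¹ (bIdx σ h) :=
  fun hc => ab_ne σ h ((σ.1⁻¹).injective hc)

lemma not_both (σ : SP n) (h : (badset σ).Nonempty) {x y : Fin n}
    (hxy : (x : ℕ) % 2 ≠ (y : ℕ) % 2) :
    ¬((x = σ.1⁻¹ (aIdx σ h) ∨ x = σ.1⁻¹ (bIdx σ h)) ∧
      (y = σ.1⁻¹ (aIdx σ h) ∨ y = σ.1⁻¹ (bIdx σ h))) := by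
  have hpar := par_eq σ h
  rintro ⟨hx | hx, hy | hy⟩ <;> rw [hx, hy] at hxy <;> omega

lemma hs_T (σ : SP n) (hs : ∀ j : Fin n, σ.2 j = false) (h : (badset σ).Nonempty) :
    ∀ j : Fin n, (T σ).2 j = false := by
  rw [T_eq σ h]; exact hs

lemma vp_fin (σ : SP n) (x : Fin n) : vp σ (x : ℕ) = ((σ.1 x : Fin n) : ℕ) := by
  simp [vp, dif_pos x.isLt, Fin.eta]

lemma vp_T_fin (σ : SP n) (h : (badset σ).Nonempty) (x : Fin n) :
    vp (T σ) (x : ℕ) = ((Equiv.swap (aIdx σ h) (bIdx σ h) (σ.1 x) : Fin n) : ℕ) := by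
  rw [vp_fin (T σ) x, T_eq σ h]
  rfl

lemma sval_fin (σ : SP n) (hs : ∀ j : Fin n, σ.2 j = false) (x : Fin n) :
    sval σ ((x : ℕ) + 1) = ((σ.1 x : Fin n) : ℕ) + 1 := by
  rw [sval_eq σ hs (by omega) (by exact x.isLt)]
  simp [vp_fin]

lemma sval_T_fin (σ : SP n) (hs : ∀ j : Fin n, σ.2 j = false) (h : (badset σ).Nonempty)
    (x : Fin n) :
    sval (T σ) ((x : ℕ) + 1) =
      ((Equiv.swap (aIdx σ h) (bIdx σ h) (σ.1 x) : Fin n) : ℕ) + 1 := by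
  rw [sval_eq (T σ) (hs_T σ hs h) (by omega) (by exact x.isLt)]
  simp only [Nat.add_sub_cancel, vp_T_fin σ h x]

lemma sval_lt_iff (σ : SP n) (hs : ∀ j : Fin n, σ.2 j = false) (h : (badset σ).Nonempty)
    (x y : Fin n)
    (hnb : ¬((x = σ.1⁻¹ (aIdx σ h) ∨ x = σ.1⁻¹ (bIdx σ h)) ∧
      (y = σ.1⁻¹ (aIdx σ h) ∨ y = σ.1⁻¹ (bIdx σ h)))) :
    (sval (T σ) ((x : ℕ) + 1) < sval (T σ) ((y : ℕ) + 1)) ↔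
      (sval σ ((x : ℕ) + 1) < sval σ ((y : ℕ) + 1)) := by
  rw [sval_fin σ hs x, sval_fin σ hs y, sval_T_fin σ hs h x, sval_T_fin σ hs h y]
  have hcmp := cmp_iff σ.1 (aIdx σ h) (bIdx σ h) (hab_idx σ h) hnb
  omega

lemma sval_pa (σ : SP n) (hs : ∀ j : Fin n, σ.2 j = false) (h : (badset σ).Nonempty) :
    sval σ (((σ.1⁻¹ (aIdx σ h) : Fin n) : ℕ) + 1) = ((aIdx σ h : Fin n) : ℕ) + 1 := by
  rw [sval_fin σ hs]; simp

lemma sval_pb (σ : SP n) (hs : ∀ j : Fin n, σ.2 j = false) (h : (badset σ).Nonempty) :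
    sval σ (((σ.1⁻¹ (bIdx σ h) : Fin n) : ℕ) + 1) = ((bIdx σ h : Fin n) : ℕ) + 1 := by
  rw [sval_fin σ hs]; simp

lemma sval_T_pa (σ : SP n) (hs : ∀ j : Fin n, σ.2 j = false) (h : (badset σ).Nonempty) :
    sval (T σ) (((σ.1⁻¹ (aIdx σ h) : Fin n) : ℕ) + 1) = ((bIdx σ h : Fin n) : ℕ) + 1 := by
  rw [sval_T_fin σ hs h]
  simp [Equiv.swap_apply_left]

lemma sval_T_pb (σ : SP n) (hs : ∀ j : Fin n, σ.2 j = false) (h : (badset σ).Nonempty) :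
    sval (T σ) (((σ.1⁻¹ (bIdx σ h) : Fin n) : ℕ) + 1) = ((aIdx σ h : Fin n) : ℕ) + 1 := by
  rw [sval_T_fin σ hs h]
  simp [Equiv.swap_apply_right]

lemma posp_T_par (σ : SP n) (h : (badset σ).Nonempty) {w : ℕ} (hw : w < n) :
    posp (T σ) w % 2 = posp σ w % 2 := by
  have hpar := par_eq σ h
  rw [posp, posp, dif_pos hw, dif_pos hw, T_eq σ h]
  have hinv : (Equiv.swap (aIdx σ h) (bIdx σ h) * σ.1, σ.2).1⁻¹ (⟨w, hw⟩ : Fin n) =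
      σ.1⁻¹ (Equiv.swap (aIdx σ h) (bIdx σ h) ⟨w, hw⟩) := by
    simp [mul_inv_rev, Equiv.swap_inv, Equiv.Perm.mul_apply]
  rw [hinv]
  by_cases hwa : (⟨w, hw⟩ : Fin n) = aIdx σ h
  · rw [hwa, Equiv.swap_apply_left]
    omega
  · by_cases hwb : (⟨w, hw⟩ : Fin n) = bIdx σ h
    · rw [hwb, Equiv.swap_apply_right]
      omega
    · rw [Equiv.swap_apply_of_ne_of_ne hwa hwb]

lemma badset_T (σ : SP n) (h : (badset σ).Nonempty) : badset (T σ) = badset σ := by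
  rw [badset, badset]
  apply Finset.filter_congr
  intro k hk
  have hkr := Finset.mem_range.1 hk
  rw [posp_T_par σ h (by omega), posp_T_par σ h (by omega)]

lemma T_T (σ : SP n) (h : (badset σ).Nonempty) : T (T σ) = σ := by
  have h' : (badset (T σ)).Nonempty := by rw [badset_T σ h]; exact h
  have hmin : (badset (T σ)).min' h' = (badset σ).min' h := by
    apply le_antisymm
    · exact Finset.min'_le _ _ (by rw [badset_T σ h]; exact Finset.min'_mem _ h)
    · exact Finset.min'_le _ _ (by rw [← badset_T σ h]; exact Finset.min'_mem _ h')
  have ha : aIdx (T σ) h' = aIdx σ h := Fin.ext (by simp [aIdx, hmin])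
  have hb : bIdx (T σ) h' = bIdx σ h := Fin.ext (by simp [bIdx, hmin])
  rw [T_eq (T σ) h', ha, hb, T_eq σ h]
  refine Prod.ext ?_ rfl
  show Equiv.swap (aIdx σ h) (bIdx σ h) * (Equiv.swap (aIdx σ h) (bIdx σ h) * σ.1) = σ.1
  rw [← mul_assoc, Equiv.swap_mul_self, one_mul]

lemma T_ne (σ : SP n) (h : (badset σ).Nonempty) : T σ ≠ σ := by
  intro he
  have h1 : (T σ).1 (σ.1⁻¹ (aIdx σ h)) = σ.1 (σ.1⁻¹ (aIdx σ h)) := by rw [he]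
  rw [T_eq σ h] at h1
  simp only [Equiv.Perm.mul_apply, Equiv.Perm.coe_inv, Equiv.apply_symm_apply, Equiv.swap_apply_left] at h1
  exact ab_ne σ h h1.symm

lemma inQuot_T (σ : SP n) (hs : ∀ j : Fin n, σ.2 j = false) (h : (badset σ).Nonempty)
    {I : Finset ℕ} (hI : I ⊆ Finset.Icc 1 (n - 1)) (hQ : InQuot σ I) : InQuot (T σ) I := by
  intro i hiI
  have hi := Finset.mem_Icc.1 (hI hiI)
  have hn : 2 ≤ n := by omega
  have hd := hQ i hiI
  rw [dval, if_neg (by omega), dval, if_neg (by omega)] at hd ⊢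
  set x : Fin n := ⟨i - 1, by omega⟩ with hxdef
  set y : Fin n := ⟨i, by omega⟩ with hydef
  have hxn : (x : ℕ) = i - 1 := rfl
  have hyn : (y : ℕ) = i := rfl
  have hx1 : (x : ℕ) + 1 = i := by omega
  have hy1 : (y : ℕ) + 1 = i + 1 := by omega
  have hnb : ¬((x = σ.1⁻¹ (aIdx σ h) ∨ x = σ.1⁻¹ (bIdx σ h)) ∧
      (y = σ.1⁻¹ (aIdx σ h) ∨ y = σ.1⁻¹ (bIdx σ h))) := by
    apply not_both σ h
    omega
  have := sval_lt_iff σ hs h x y hnb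
  rw [hx1, hy1] at this
  exact this.2 hd

lemma oinv_T (σ : SP n) (hs : ∀ j : Fin n, σ.2 j = false) (h : (badset σ).Nonempty) :
    oinvSP (T σ) = oinvSP σ := by
  unfold oinvSP
  congr 1
  apply Finset.filter_congr
  intro p hp
  obtain ⟨hp1, hp2, hp3⟩ := mem_pairs.1 hp
  by_cases hpar : p.1 % 2 = p.2 % 2
  · simp [hpar]
  · set x : Fin n := ⟨p.1 - 1, by omega⟩ with hxdef
    set y : Fin n := ⟨p.2 - 1, by omega⟩ with hydef
    have hxn : (x : ℕ) = p.1 - 1 := rfl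
    have hyn : (y : ℕ) = p.2 - 1 := rfl
    have hx1 : (x : ℕ) + 1 = p.1 := by omega
    have hy1 : (y : ℕ) + 1 = p.2 := by omega
    have hnb : ¬((x = σ.1⁻¹ (aIdx σ h) ∨ x = σ.1⁻¹ (bIdx σ h)) ∧
        (y = σ.1⁻¹ (aIdx σ h) ∨ y = σ.1⁻¹ (bIdx σ h))) := by
      apply not_both σ h
      omega
    have hiff := sval_lt_iff σ hs h y x (fun hc => hnb ⟨hc.2, hc.1⟩)
    rw [hx1, hy1] at hiff
    constructor
    · rintro ⟨h1, h2⟩; exact ⟨hiff.1 h1, h2⟩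
    · rintro ⟨h1, h2⟩; exact ⟨hiff.2 h1, h2⟩

lemma inv_T_parity (σ : SP n) (hs : ∀ j : Fin n, σ.2 j = false) (h : (badset σ).Nonempty) :
    Odd (invSP (T σ) + invSP σ) := by
  unfold invSP
  have hpane := pab_ne σ h
  set pa : Fin n := σ.1⁻¹ (aIdx σ h) with hpadef
  set pb : Fin n := σ.1⁻¹ (bIdx σ h) with hpbdef
  have hvalne : (pa : ℕ) ≠ (pb : ℕ) := fun hc => hpane (Fin.ext hc)
  have hab := hab_idx σ h
  have key : ∀ (P Q : ℕ), P = (pa : ℕ) + 1 → Q = (pb : ℕ) + 1 → P < Q ∨ Q < P →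
      Odd (((pairs n).filter (fun p => sval (T σ) p.2 < sval (T σ) p.1)).card +
        ((pairs n).filter (fun p => sval σ p.2 < sval σ p.1)).card) := by
    intro P Q hP hQ hPQ
    have hsa := sval_pa σ hs h
    have hsb := sval_pb σ hs h
    have hsta := sval_T_pa σ hs h
    have hstb := sval_T_pb σ hs h
    rw [← hpadef, ← hP] at hsa hsta
    rw [← hpbdef, ← hQ] at hsb hstb
    set e : ℕ × ℕ := if P < Q then (P, Q) else (Q, P) with hedef
    have he : e ∈ pairs n := by
      rw [mem_pairs, hedef]
      have := pb.isLt
      have := pa.isLt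
      split <;> simp <;> omega
    apply card_filter_flip (pairs n) _ _ e he
    · intro p hp hpe
      obtain ⟨hp1, hp2, hp3⟩ := mem_pairs.1 hp
      set x : Fin n := ⟨p.1 - 1, by omega⟩ with hxdef
      set y : Fin n := ⟨p.2 - 1, by omega⟩ with hydef
      have hxn : (x : ℕ) = p.1 - 1 := rfl
      have hyn : (y : ℕ) = p.2 - 1 := rfl
      have hx1 : (x : ℕ) + 1 = p.1 := by omega
      have hy1 : (y : ℕ) + 1 = p.2 := by omega
      have hnb : ¬((x = pa ∨ x = pb) ∧ (y = pa ∨ y = pb)) := by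
        rintro ⟨hx | hx, hy | hy⟩
        · have h1 := congrArg Fin.val hx
          have h2 := congrArg Fin.val hy
          omega
        · apply hpe
          have h1 := congrArg Fin.val hx
          have h2 := congrArg Fin.val hy
          have hxv : p.1 = P := by omega
          have hyv : p.2 = Q := by omega
          rw [hedef, if_pos (by omega)]
          exact Prod.ext hxv hyv
        · apply hpe
          have h1 := congrArg Fin.val hx
          have h2 := congrArg Fin.val hy
          have hxv : p.1 = Q := by omega
          have hyv : p.2 = P := by omega
          rw [hedef, if_neg (by omega)]
          exact Prod.ext hxv hyv
        · have h1 := congrArg Fin.val hx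
          have h2 := congrArg Fin.val hy
          omega
      have hiff := sval_lt_iff σ hs h y x (fun hc => hnb ⟨hc.2, hc.1⟩)
      rw [hx1, hy1] at hiff
      exact hiff
    · have hb' : ((bIdx σ h : Fin n) : ℕ) = ((aIdx σ h : Fin n) : ℕ) + 1 := hab.symm
      rw [hedef]
      split
      · show sval (T σ) Q < sval (T σ) P ↔ ¬ sval σ Q < sval σ P
        rw [hsa, hsb, hsta, hstb]
        constructor
        · intro _ hc
          omega
        · intro _
          omega
      · show sval (T σ) P < sval (T σ) Q ↔ ¬ sval σ P < sval σ Q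
        rw [hsa, hsb, hsta, hstb]
        constructor
        · intro _ hc
          omega
        · intro _
          omega
  exact key ((pa : ℕ) + 1) ((pb : ℕ) + 1) rfl rfl (by omega)

lemma cancel_sum (σ : SP n) (hs : ∀ j : Fin n, σ.2 j = false) (h : (badset σ).Nonempty) :
    (-1 : Polynomial ℤ) ^ invSP σ * X ^ oinvSP σ +
      (-1 : Polynomial ℤ) ^ invSP (T σ) * X ^ oinvSP (T σ) = 0 := by
  rw [oinv_T σ hs h]
  have hodd := inv_T_parity σ hs h
  have hiff := Nat.odd_add.1 hodd
  rcases Nat.even_or_odd (invSP σ) with he | ho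
  · rw [Odd.neg_one_pow (hiff.2 he), Even.neg_one_pow he]
    ring
  · have heT : Even (invSP (T σ)) := by
      rcases Nat.even_or_odd (invSP (T σ)) with h1 | h1
      · exact h1
      · exact absurd (hiff.1 h1) (Nat.not_even_iff_odd.2 ho)
    rw [Odd.neg_one_pow ho, Even.neg_one_pow heT]
    ring

end Stmt11Aux

/-- Lemma 4.3: the type-`A` sign-twisted generating function over `S_n^I` is supported
on chessboard permutations. Elements of `S_n` are encoded as signed permutations all
of whose entries are positive. -/
theorem stmt11 (n : ℕ) (I : Finset ℕ) (hI : I ⊆ Finset.Icc 1 (n - 1)) :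
    (∑ σ ∈ Finset.univ.filter
        (fun σ : SP n => PosSP σ ∧ InQuot σ I),
      (-1 : Polynomial ℤ) ^ invSP σ * X ^ oinvSP σ) =
    ∑ σ ∈ Finset.univ.filter
        (fun σ : SP n => PosSP σ ∧ InQuot σ I ∧ Chessboard σ),
      (-1 : Polynomial ℤ) ^ invSP σ * X ^ oinvSP σ := by
  classical
  have hsum : ∑ σ ∈ Finset.univ.filter
      (fun σ : SP n => (PosSP σ ∧ InQuot σ I) ∧ ¬ Chessboard σ),
      (-1 : Polynomial ℤ) ^ invSP σ * X ^ oinvSP σ = 0 := by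
    apply Finset.sum_involution (fun σ _ => T σ)
    · intro σ hσ
      obtain ⟨⟨hp, _⟩, hc⟩ := (Finset.mem_filter.1 hσ).2
      have hs := (pos_iff_sgn σ).1 hp
      have h : (badset σ).Nonempty := Finset.nonempty_iff_ne_empty.2
        (fun hc' => hc ((chess_iff_badset_empty σ hs).2 hc'))
      exact cancel_sum σ hs h
    · intro σ hσ _
      obtain ⟨⟨hp, _⟩, hc⟩ := (Finset.mem_filter.1 hσ).2
      have hs := (pos_iff_sgn σ).1 hp
      have h : (badset σ).Nonempty := Finset.nonempty_iff_ne_empty.2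
        (fun hc' => hc ((chess_iff_badset_empty σ hs).2 hc'))
      exact T_ne σ h
    · intro σ hσ
      obtain ⟨⟨hp, hq⟩, hc⟩ := (Finset.mem_filter.1 hσ).2
      have hs := (pos_iff_sgn σ).1 hp
      have h : (badset σ).Nonempty := Finset.nonempty_iff_ne_empty.2
        (fun hc' => hc ((chess_iff_badset_empty σ hs).2 hc'))
      have hsT := hs_T σ hs h
      refine Finset.mem_filter.2 ⟨Finset.mem_univ _, ⟨⟨?_, ?_⟩, ?_⟩⟩
      · exact (pos_iff_sgn _).2 hsT
      · exact inQuot_T σ hs h hI hq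
      · intro hcT
        have : badset (T σ) = ∅ := (chess_iff_badset_empty _ hsT).1 hcT
        rw [badset_T σ h] at this
        exact Finset.nonempty_iff_ne_empty.1 h this
    · intro σ hσ
      obtain ⟨⟨hp, _⟩, hc⟩ := (Finset.mem_filter.1 hσ).2
      have hs := (pos_iff_sgn σ).1 hp
      have h : (badset σ).Nonempty := Finset.nonempty_iff_ne_empty.2
        (fun hc' => hc ((chess_iff_badset_empty σ hs).2 hc'))
      exact T_T σ h
  have hsplit := Finset.sum_filter_add_sum_filter_not
    (Finset.univ.filter (fun σ : SP n => PosSP σ ∧ InQuot σ I))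
    (fun σ : SP n => Chessboard σ)
    (fun σ : SP n => (-1 : Polynomial ℤ) ^ invSP σ * X ^ oinvSP σ)
  rw [Finset.filter_filter, Finset.filter_filter] at hsplit
  rw [← hsplit, hsum, add_zero]
  apply Finset.sum_congr
  · apply Finset.filter_congr
    intro σ _
    tauto
  · intro _ _
    rfl

end OddLength
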